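/- Let x ∈ ℝ³ be a unit vector, F ∈ ℝ^{3×2} a matrix with FᵀF = I₂ and Fᵀx = 0, Σ̂ ∈ ℝ^{3×3} symmetric positive definite, and μ ∈ ℝ³. Then the 2×2 matrix FᵀΣ̂F is invertible and μᵀF(FᵀΣ̂F)⁻¹Fᵀμ = (μ − τ̂(x)x)ᵀ Σ̂⁻¹ (μ − τ̂(x)x), where τ̂(x) := (μᵀΣ̂⁻¹x)/(xᵀΣ̂⁻¹x); equivalently, μᵀF(FᵀΣ̂F)⁻¹Fᵀμ = μᵀ[Σ̂⁻¹ − (Σ̂⁻¹x xᵀ Σ̂⁻¹)/(xᵀΣ̂⁻¹x)]μ. -/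

import Mathlib

open Matrix

private lemma vmv_mulVec (x y v : Fin 3 → ℝ) :
    vecMulVec x y *ᵥ v = (y ⬝ᵥ v) • x := by
  ext i
  simp only [mulVec, dotProduct, vecMulVec_apply, Pi.smul_apply, smul_eq_mul,
    Finset.sum_mul]
  exact Finset.sum_congr rfl fun k _ => by ring

private lemma ffT (x : Fin 3 → ℝ) (hx : x ⬝ᵥ x = 1)
    (F : Matrix (Fin 3) (Fin 2) ℝ) (hF : Fᵀ * F = 1) (hFx : Fᵀ.mulVec x = 0) :
    F * Fᵀ = 1 - vecMulVec x x := by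
  have hcol : Fᵀ * replicateCol (Fin 1) x = 0 := by
    ext i j
    simpa [Matrix.mul_apply, replicateCol, mulVec, dotProduct] using congrFun hFx i
  have hrow : replicateRow (Fin 1) x * F = 0 := by
    have := congrArg transpose hcol
    simpa [transpose_mul] using this
  have hxx : replicateRow (Fin 1) x * replicateCol (Fin 1) x = 1 := by
    ext i j
    obtain rfl : i = j := Subsingleton.elim i j
    simpa [Matrix.mul_apply, replicateCol, replicateRow, dotProduct, Matrix.one_apply] using hx
  have h1 : fromRows Fᵀ (replicateRow (Fin 1) x) * fromCols F (replicateCol (Fin 1) x) = 1 := by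
    rw [fromRows_mul_fromCols, hF, hcol, hrow, hxx, fromBlocks_one]
  have h2 : fromCols F (replicateCol (Fin 1) x) * fromRows Fᵀ (replicateRow (Fin 1) x) = 1 := by
    rw [fromCols_mul_fromRows_eq_one_comm (finSumFinEquiv (m := 2) (n := 1)).symm]
    exact h1
  rw [fromCols_mul_fromRows] at h2
  rw [show replicateCol (Fin 1) x * replicateRow (Fin 1) x = vecMulVec x x from (vecMulVec_eq (Fin 1) x x).symm] at h2
  linear_combination (norm := abel) h2

/-- If `x ∈ ℝ³` is a unit vector, `F ∈ ℝ^{3×2}` has orthonormal columns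
orthogonal to `x`, and `Σ̂` is symmetric positive definite, then `FᵀΣ̂F` is
invertible and `μᵀF(FᵀΣ̂F)⁻¹Fᵀμ = (μ − τ̂(x)x)ᵀΣ̂⁻¹(μ − τ̂(x)x)`, with
`τ̂(x) = (μᵀΣ̂⁻¹x)/(xᵀΣ̂⁻¹x)`; equivalently it equals
`μᵀ[Σ̂⁻¹ − (Σ̂⁻¹xxᵀΣ̂⁻¹)/(xᵀΣ̂⁻¹x)]μ`. -/
theorem stmt_17 (x : Fin 3 → ℝ) (hx : x ⬝ᵥ x = 1)
    (F : Matrix (Fin 3) (Fin 2) ℝ) (hF : Fᵀ * F = 1) (hFx : Fᵀ.mulVec x = 0)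
    (Shat : Matrix (Fin 3) (Fin 3) ℝ) (hShat : Shat.PosDef) (μ : Fin 3 → ℝ) :
    let τhat : ℝ := (μ ⬝ᵥ Shat⁻¹.mulVec x) / (x ⬝ᵥ Shat⁻¹.mulVec x)
    IsUnit (Fᵀ * Shat * F).det ∧
    μ ⬝ᵥ F.mulVec ((Fᵀ * Shat * F)⁻¹.mulVec (Fᵀ.mulVec μ)) =
      (μ - τhat • x) ⬝ᵥ Shat⁻¹.mulVec (μ - τhat • x) ∧
    μ ⬝ᵥ F.mulVec ((Fᵀ * Shat * F)⁻¹.mulVec (Fᵀ.mulVec μ)) =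
      μ ⬝ᵥ (Shat⁻¹ -
        (1 / (x ⬝ᵥ Shat⁻¹.mulVec x)) • (Shat⁻¹ * vecMulVec x x * Shat⁻¹)).mulVec μ := by
  intro τhat
  set A := Shat⁻¹ with hAdef
  have hApd : A.PosDef := hShat.inv
  have hAsymm : Aᵀ = A := by
    have := hApd.isHermitian
    rwa [IsHermitian, conjTranspose_eq_transpose_of_trivial] at this
  have hSA : Shat * A = 1 := mul_nonsing_inv _ hShat.det_pos.ne'.isUnit
  have hx0 : x ≠ 0 := by
    intro h
    rw [h] at hx
    simp at hx
  set c : ℝ := x ⬝ᵥ A *ᵥ x with hcdef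
  have hc : 0 < c := by simpa only [star_trivial] using hApd.dotProduct_mulVec_pos hx0
  have hcne : c ≠ 0 := hc.ne'
  set V : Matrix (Fin 3) (Fin 3) ℝ := vecMulVec x x with hVdef
  set M : Matrix (Fin 3) (Fin 3) ℝ := A - (1 / c) • (A * V * A) with hMdef
  -- M *ᵥ x = 0
  have hMx : M *ᵥ x = 0 := by
    rw [hMdef, sub_mulVec, smul_mulVec, ← mulVec_mulVec, ← mulVec_mulVec,
      vmv_mulVec, ← hcdef, mulVec_smul, smul_smul, one_div, inv_mul_cancel₀ hcne,
      one_smul, sub_self]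
  have hMsymm : Mᵀ = M := by
    have hVsymm : Vᵀ = V := by
      ext i j
      simp [hVdef, vecMulVec_apply, mul_comm]
    rw [hMdef, transpose_sub, transpose_smul, transpose_mul, transpose_mul,
      hAsymm, hVsymm, Matrix.mul_assoc]
  have hxM : x ᵥ* M = 0 := by rw [← mulVec_transpose, hMsymm, hMx]
  -- M * V = 0 and V * M = 0
  have hMV : M * V = 0 := by
    ext i j
    simp only [Matrix.mul_apply, hVdef, vecMulVec_apply, Matrix.zero_apply]
    have h := congrFun hMx i
    simp only [mulVec, dotProduct, Pi.zero_apply] at h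
    calc ∑ k, M i k * (x k * x j) = (∑ k, M i k * x k) * x j := by
          rw [Finset.sum_mul]; exact Finset.sum_congr rfl fun k _ => by ring
      _ = 0 := by rw [h, zero_mul]
  have hVM : V * M = 0 := by
    ext i j
    simp only [Matrix.mul_apply, hVdef, vecMulVec_apply, Matrix.zero_apply]
    have h := congrFun hxM j
    simp only [vecMul, dotProduct, Pi.zero_apply] at h
    calc ∑ k, x i * x k * M k j = x i * ∑ k, x k * M k j := by
          rw [Finset.mul_sum]; exact Finset.sum_congr rfl fun k _ => by ring
      _ = 0 := by rw [h, mul_zero]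
  -- FᵀV = 0
  have hFV : Fᵀ * V = 0 := by
    ext i j
    simp only [Matrix.mul_apply, hVdef, vecMulVec_apply, Matrix.zero_apply]
    have h := congrFun hFx i
    simp only [mulVec, dotProduct, Pi.zero_apply] at h
    calc ∑ k, Fᵀ i k * (x k * x j) = (∑ k, Fᵀ i k * x k) * x j := by
          rw [Finset.sum_mul]; exact Finset.sum_congr rfl fun k _ => by ring
      _ = 0 := by rw [h, zero_mul]
  have hFFT : F * Fᵀ = 1 - V := ffT x hx F hF hFx
  -- Shat * M
  have hSM : Shat * M = 1 - (1 / c) • (V * A) := by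
    rw [hMdef, Matrix.mul_sub, Matrix.mul_smul, hSA]
    congr 2
    rw [← Matrix.mul_assoc, ← Matrix.mul_assoc, hSA, Matrix.one_mul]
  have hPM : (1 - V) * M = M := by
    rw [Matrix.sub_mul, Matrix.one_mul, hVM, sub_zero]
  have hMP : M * (1 - V) = M := by
    rw [Matrix.mul_sub, Matrix.mul_one, hMV, sub_zero]
  -- right inverse
  have hinv : (Fᵀ * Shat * F) * (Fᵀ * M * F) = 1 := by
    have e : (Fᵀ * Shat * F) * (Fᵀ * M * F) = Fᵀ * (Shat * ((F * Fᵀ) * M)) * F := by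
      simp only [Matrix.mul_assoc]
    rw [e, hFFT, hPM, hSM, Matrix.mul_sub, Matrix.mul_one, Matrix.sub_mul, hF,
      Matrix.mul_smul, ← Matrix.mul_assoc Fᵀ V A, hFV, Matrix.zero_mul, smul_zero,
      Matrix.zero_mul, sub_zero]
  have hdet : IsUnit (Fᵀ * Shat * F).det := isUnit_det_of_right_inverse hinv
  have hinveq : (Fᵀ * Shat * F)⁻¹ = Fᵀ * M * F := inv_eq_right_inv hinv
  -- F (FᵀMF) Fᵀ = M
  have hFMF : F * (Fᵀ * M * F) * Fᵀ = M := by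
    have h1 : F * (Fᵀ * M * F) * Fᵀ = (F * Fᵀ) * (M * (F * Fᵀ)) := by
      simp only [Matrix.mul_assoc]
    rw [h1, hFFT, hMP, hPM]
  -- LHS = μᵀ M μ
  have hLHS : μ ⬝ᵥ F.mulVec ((Fᵀ * Shat * F)⁻¹.mulVec (Fᵀ.mulVec μ)) = μ ⬝ᵥ M *ᵥ μ := by
    rw [hinveq, mulVec_mulVec, mulVec_mulVec, hFMF]
  refine ⟨hdet, ?_, ?_⟩
  · -- quadratic form identity
    rw [hLHS]
    have hsym : x ⬝ᵥ A *ᵥ μ = μ ⬝ᵥ A *ᵥ x := by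
      rw [dotProduct_mulVec, ← mulVec_transpose, hAsymm, dotProduct_comm]
    have hMμ : μ ⬝ᵥ M *ᵥ μ =
        μ ⬝ᵥ A *ᵥ μ - (1 / c) * ((μ ⬝ᵥ A *ᵥ x) * (x ⬝ᵥ A *ᵥ μ)) := by
      rw [hMdef, sub_mulVec, smul_mulVec, ← mulVec_mulVec, ← mulVec_mulVec,
        vmv_mulVec, mulVec_smul, dotProduct_sub]
      simp only [dotProduct_smul, smul_eq_mul]
      ring
    rw [hMμ]
    have hexp : (μ - τhat • x) ⬝ᵥ A *ᵥ (μ - τhat • x) =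
        μ ⬝ᵥ A *ᵥ μ - τhat * (x ⬝ᵥ A *ᵥ μ) - τhat * (μ ⬝ᵥ A *ᵥ x) + τhat * τhat * c := by
      simp only [mulVec_sub, mulVec_smul, dotProduct_sub, sub_dotProduct,
        dotProduct_smul, smul_dotProduct, smul_eq_mul]
      rw [hcdef]
      ring
    rw [hexp, hsym]
    have hτ : τhat = (μ ⬝ᵥ A *ᵥ x) / c := rfl
    rw [hτ]
    field_simp
    ring
  · rw [hLHS, hMdef, hVdef, hcdef]
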